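/- arXiv:0905.4870 — 2 statements merged into one kernel-verified Lean document; each statement's English description precedes it below -/
import Mathlib

section
/- Let K be an integral domain, W ≤ S_d with |W| invertible in K, and χ : W → U(K) a character. For every free K-module E with finite basis let ι_E^{(d)} : [χ⁻¹]^d(E*) → ([χ]^d(E))* be the K-linear map sending y* to the linear form B(−, y*). Then ι_E^{(d)} is an isomorphism of K-modules, and it is natural in E: for every K-linear map u : E → F between free K-modules with finite bases, ᵗ([χ]^d(u)) ∘ ι_F^{(d)} = ι_E^{(d)} ∘ [χ⁻¹]^d(ᵗu), where ᵗ denotes the transpose (dual) of a linear map; equivalently, B_F([χ]^d(u)(x), y*) = B_E(x, [χ⁻¹]^d(ᵗu)(y*)) for all x ∈ [χ]^d(E) and y* ∈ [χ⁻¹]^d(F*). -/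
noncomputable section

open scoped TensorProduct

/-- The action of a permutation `σ` of `Fin d` on the `d`-th tensor power
`T^d(E)`, determined by `σ • (x₁ ⊗ ⋯ ⊗ x_d) = x_{σ⁻¹(1)} ⊗ ⋯ ⊗ x_{σ⁻¹(d)}`. -/
def permAct (K : Type*) [CommRing K] (E : Type*) [AddCommGroup E] [Module K E]
    (d : ℕ) (σ : Equiv.Perm (Fin d)) :
    (⨂[K] (_ : Fin d), E) ≃ₗ[K] ⨂[K] (_ : Fin d), E :=
  PiTensorProduct.reindex K (fun _ : Fin d => E) σ

/-- The submodule `_{χ⁻¹}T^d(E)` of `T^d(E)` generated by the elements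
`χ⁻¹(σ) z − σ z` for `σ ∈ W`; the quotient by it is the `d`-th
semi-symmetric power `[χ]^d(E)` of weight `χ`. -/
def chiKer {K : Type*} [CommRing K] (E : Type*) [AddCommGroup E] [Module K E]
    {d : ℕ} (W : Subgroup (Equiv.Perm (Fin d))) (χ : W →* Kˣ) :
    Submodule K (⨂[K] (_ : Fin d), E) :=
  Submodule.span K {w | ∃ (σ : W) (z : ⨂[K] (_ : Fin d), E),
    w = (((χ σ)⁻¹ : Kˣ) : K) • z - permAct K E d (σ : Equiv.Perm (Fin d)) z}

/-- The `d`-th semi-symmetric power `[χ]^d(E) = T^d(E)/_{χ⁻¹}T^d(E)`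
of weight `χ` of the `K`-module `E`. -/
abbrev SemiPow {K : Type*} [CommRing K] (E : Type*) [AddCommGroup E] [Module K E]
    {d : ℕ} (W : Subgroup (Equiv.Perm (Fin d))) (χ : W →* Kˣ) :=
  (⨂[K] (_ : Fin d), E) ⧸ chiKer E W χ

/-- The decomposable `d-χ`-vector `x₁ χ ⋯ χ x_d`. -/
def semiMk {K : Type*} [CommRing K] {E : Type*} [AddCommGroup E] [Module K E]
    {d : ℕ} (W : Subgroup (Equiv.Perm (Fin d))) (χ : W →* Kˣ)
    (x : Fin d → E) : SemiPow E W χ :=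
  Submodule.Quotient.mk (PiTensorProduct.tprod K x)


/-- The generalized Schur function
`d_χ^W(A) = Σ_{σ ∈ W} χ(σ) · a_{σ⁻¹(1),1} ⋯ a_{σ⁻¹(d),d}`. -/
def schurFn {K : Type*} [CommRing K] {d : ℕ} (W : Subgroup (Equiv.Perm (Fin d)))
    (χ : W →* Kˣ) (A : Matrix (Fin d) (Fin d) K) : K :=
  ∑ᶠ σ : W, ((χ σ : Kˣ) : K) * ∏ t : Fin d, A (((σ : Equiv.Perm (Fin d)))⁻¹ t) t

/-- Strict lexicographic comparison of functions. -/
def lexLT {ι : Type*} [LT ι] {α : Type*} [LT α] (f g : ι → α) : Prop :=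
  Pi.Lex (· < ·) (fun {_} => (· < ·)) f g

/-- The set `J(χ,n,d)` of multi-indices `i ∈ [1,n]^d` that are
lexicographically minimal in their `W`-orbit (for the action
`(σ i)_t = i_{σ⁻¹(t)}`) and on whose stabilizer `W_i` the character `χ`
is trivial. -/
def Jset {K : Type*} [CommRing K] {d : ℕ} (W : Subgroup (Equiv.Perm (Fin d)))
    (χ : W →* Kˣ) (n : ℕ) : Set (Fin d → Fin n) :=
  {i | (∀ σ : W, i ∘ ⇑(((σ : Equiv.Perm (Fin d)))⁻¹) = i → χ σ = 1) ∧
       (∀ σ : W, ¬ lexLT (i ∘ ⇑(((σ : Equiv.Perm (Fin d)))⁻¹)) i)}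

/-- The order of the stabilizer `W_i` of a multi-index `i`. -/
def stabCard {d : ℕ} (W : Subgroup (Equiv.Perm (Fin d))) {n : ℕ}
    (i : Fin d → Fin n) : ℕ :=
  Nat.card {σ : W // i ∘ ⇑(((σ : Equiv.Perm (Fin d)))⁻¹) = i}

lemma map_permAct {K : Type*} [CommRing K] {E F : Type*}
    [AddCommGroup E] [Module K E] [AddCommGroup F] [Module K F]
    {d : ℕ} (u : E →ₗ[K] F) (σ : Equiv.Perm (Fin d)) (z : ⨂[K] (_ : Fin d), E) :
    PiTensorProduct.map (fun _ => u) (permAct K E d σ z)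
      = permAct K F d σ (PiTensorProduct.map (fun _ => u) z) := by
  induction z using PiTensorProduct.induction_on with
  | smul_tprod c f =>
      simp [permAct, PiTensorProduct.reindex_tprod, PiTensorProduct.map_tprod,
        Function.comp_def]
  | add x y hx hy => simp [map_add, hx, hy]

/-- The `K`-linear map `[χ]^d(u) : [χ]^d(E) → [χ]^d(F)` induced by a
`K`-linear map `u : E → F`. -/
def semiMap {K : Type*} [CommRing K] {E F : Type*}
    [AddCommGroup E] [Module K E] [AddCommGroup F] [Module K F]
    {d : ℕ} (W : Subgroup (Equiv.Perm (Fin d))) (χ : W →* Kˣ)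
    (u : E →ₗ[K] F) : SemiPow E W χ →ₗ[K] SemiPow F W χ :=
  Submodule.mapQ _ _ (PiTensorProduct.map fun _ => u) (by
    rw [chiKer, Submodule.span_le]
    rintro w ⟨σ, z, rfl⟩
    simp only [SetLike.mem_coe, Submodule.mem_comap, map_sub, map_smul]
    rw [map_permAct]
    exact Submodule.subset_span ⟨σ, _, rfl⟩)


section DualityAux

open PiTensorProduct

variable {K : Type*} [CommRing K] {E : Type*} [AddCommGroup E] [Module K E] {d : ℕ}

/-- The multilinear map sending a family of functionals to the induced functional on the
tensor power. -/
def dualMulti (K : Type*) [CommRing K] (E : Type*) [AddCommGroup E] [Module K E] (d : ℕ) :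
    MultilinearMap K (fun _ : Fin d => Module.Dual K E)
      (Module.Dual K (⨂[K] (_ : Fin d), E)) where
  toFun y := PiTensorProduct.lift ((MultilinearMap.mkPiAlgebra K (Fin d) K).compLinearMap y)
  map_update_add' := by
    intro _ y i a b
    ext x
    have h : ∀ (c : Module.Dual K E), (fun t => (Function.update y i c t) (x t))
        = Function.update (fun t => y t (x t)) i (c (x i)) := fun c => funext fun t =>
      Function.apply_update (fun t (g : Module.Dual K E) => g (x t)) y i c t
    simp only [LinearMap.compMultilinearMap_apply, lift.tprod,
      MultilinearMap.compLinearMap_apply, MultilinearMap.mkPiAlgebra_apply,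
      LinearMap.add_apply, h]
    rw [Finset.prod_update_of_mem (Finset.mem_univ i),
      Finset.prod_update_of_mem (Finset.mem_univ i),
      Finset.prod_update_of_mem (Finset.mem_univ i)]
    ring
  map_update_smul' := by
    intro _ y i c a
    ext x
    have h : ∀ (c : Module.Dual K E), (fun t => (Function.update y i c t) (x t))
        = Function.update (fun t => y t (x t)) i (c (x i)) := fun c => funext fun t =>
      Function.apply_update (fun t (g : Module.Dual K E) => g (x t)) y i c t
    simp only [LinearMap.compMultilinearMap_apply, lift.tprod,
      MultilinearMap.compLinearMap_apply, MultilinearMap.mkPiAlgebra_apply,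
      LinearMap.smul_apply, h]
    rw [Finset.prod_update_of_mem (Finset.mem_univ i),
      Finset.prod_update_of_mem (Finset.mem_univ i)]
    simp only [smul_eq_mul]
    ring

/-- The canonical pairing `T^d(E*) → (T^d E)*`. -/
def dualPairAux (K : Type*) [CommRing K] (E : Type*) [AddCommGroup E] [Module K E] (d : ℕ) :
    (⨂[K] (_ : Fin d), Module.Dual K E) →ₗ[K] Module.Dual K (⨂[K] (_ : Fin d), E) :=
  PiTensorProduct.lift (dualMulti K E d)

@[simp] lemma dualPairAux_tprod (y : Fin d → Module.Dual K E) (x : Fin d → E) :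
    dualPairAux K E d (tprod K y) (tprod K x) = ∏ t, y t (x t) := by
  simp [dualPairAux, dualMulti]

lemma dualPairAux_bijective {n : ℕ} (bE : Module.Basis (Fin n) K E) :
    Function.Bijective (dualPairAux K E d) := by
  classical
  set Ψ : Module.Dual K (⨂[K] (_ : Fin d), E) →ₗ[K] ⨂[K] (_ : Fin d), Module.Dual K E :=
    ∑ i : Fin d → Fin n,
      LinearMap.smulRight (Module.Dual.eval K _ (tprod K fun t => bE (i t)))
        (tprod K fun t => bE.coord (i t)) with hΨ
  have hΨapp : ∀ f, Ψ f = ∑ i : Fin d → Fin n,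
      f (tprod K fun t => bE (i t)) • (tprod K fun t => bE.coord (i t)) := by
    intro f
    simp [hΨ, LinearMap.sum_apply]
  have hleft : ∀ w, Ψ (dualPairAux K E d w) = w := by
    intro w
    induction w using PiTensorProduct.induction_on with
    | smul_tprod c y =>
      rw [map_smul, map_smul, hΨapp]
      congr 1
      simp only [dualPairAux_tprod]
      have expand : tprod K y
          = tprod K (fun t => ∑ j : Fin n, (y t) (bE j) • bE.coord j) := by
        congr 1
        exact funext fun t => (bE.sum_dual_apply_smul_coord (y t)).symm
      calc ∑ i : Fin d → Fin n,
            (∏ t, (y t) (bE (i t))) • (tprod K fun t => bE.coord (i t))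
          = ∑ i : Fin d → Fin n, tprod K (fun t => (y t) (bE (i t)) • bE.coord (i t)) := by
            refine Finset.sum_congr rfl fun i _ => ?_
            rw [MultilinearMap.map_smul_univ]
        _ = tprod K (fun t => ∑ j : Fin n, (y t) (bE j) • bE.coord j) := by
            rw [MultilinearMap.map_sum]
        _ = tprod K y := expand.symm
    | add w₁ w₂ h₁ h₂ => rw [map_add, map_add, h₁, h₂]
  have hright : ∀ f, dualPairAux K E d (Ψ f) = f := by
    intro f
    ext x
    simp only [LinearMap.compMultilinearMap_apply]
    rw [hΨapp, map_sum]
    have expand : (tprod K x : ⨂[K] (_ : Fin d), E)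
        = ∑ i : Fin d → Fin n, (∏ t, bE.repr (x t) (i t)) • tprod K (fun t => bE (i t)) := by
      calc (tprod K x : ⨂[K] (_ : Fin d), E)
          = tprod K (fun t => ∑ j : Fin n, bE.repr (x t) j • bE j) := by
            congr 1; exact funext fun t => (bE.sum_repr (x t)).symm
        _ = ∑ i : Fin d → Fin n, tprod K (fun t => bE.repr (x t) (i t) • bE (i t)) := by
            rw [MultilinearMap.map_sum]
        _ = ∑ i : Fin d → Fin n, (∏ t, bE.repr (x t) (i t)) • tprod K (fun t => bE (i t)) := by
            refine Finset.sum_congr rfl fun i _ => ?_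
            rw [MultilinearMap.map_smul_univ]
    conv_rhs => rw [expand, map_sum]
    simp only [LinearMap.sum_apply, LinearMap.smul_apply, dualPairAux_tprod, map_smul,
      smul_eq_mul, Module.Basis.coord_apply]
    exact Finset.sum_congr rfl fun i _ => mul_comm _ _
  exact ⟨fun a b hab => by rw [← hleft a, hab, hleft b], fun f => ⟨Ψ f, hright f⟩⟩


/-- The symmetrizer `S = ∑_{σ ∈ W} χ(σ) • σ` on the tensor power. -/
def symAct (W : Subgroup (Equiv.Perm (Fin d))) (χ : W →* Kˣ) :
    (⨂[K] (_ : Fin d), E) →ₗ[K] ⨂[K] (_ : Fin d), E :=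
  ∑ᶠ σ : W, (((χ σ) : Kˣ) : K) • (permAct K E d (σ : Equiv.Perm (Fin d))).toLinearMap

lemma symAct_eq (W : Subgroup (Equiv.Perm (Fin d))) [Fintype W] (χ : W →* Kˣ) :
    symAct (E := E) W χ
      = ∑ σ : W, (((χ σ) : Kˣ) : K) • (permAct K E d (σ : Equiv.Perm (Fin d))).toLinearMap :=
  finsum_eq_sum_of_fintype _

lemma permAct_tprod (σ : Equiv.Perm (Fin d)) (x : Fin d → E) :
    permAct K E d σ (tprod K x) = tprod K fun t => x (σ⁻¹ t) :=
  PiTensorProduct.reindex_tprod σ x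

lemma mem_chiKer_sub_symAct (W : Subgroup (Equiv.Perm (Fin d))) (χ : W →* Kˣ)
    (hcard : IsUnit ((Nat.card W : K))) (z : ⨂[K] (_ : Fin d), E) :
    z - ((hcard.unit⁻¹ : Kˣ) : K) • symAct W χ z ∈ chiKer E W χ := by
  classical
  letI : Fintype W := Fintype.ofFinite W
  have hz : z - ((hcard.unit⁻¹ : Kˣ) : K) • symAct W χ z
      = ((hcard.unit⁻¹ : Kˣ) : K) •
        ∑ σ : W, (((χ σ) : Kˣ) : K) •
          ((((χ σ)⁻¹ : Kˣ) : K) • z - permAct K E d (σ : Equiv.Perm (Fin d)) z) := by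
    have h1 : ∀ σ : W, (((χ σ) : Kˣ) : K) •
        ((((χ σ)⁻¹ : Kˣ) : K) • z - permAct K E d (σ : Equiv.Perm (Fin d)) z)
        = z - (((χ σ) : Kˣ) : K) • permAct K E d (σ : Equiv.Perm (Fin d)) z := by
      intro σ
      rw [smul_sub, smul_smul]
      norm_num
    rw [Finset.sum_congr rfl fun σ _ => h1 σ, Finset.sum_sub_distrib, Finset.sum_const,
      Finset.card_univ, smul_sub, symAct_eq]
    have h2 : ((hcard.unit⁻¹ : Kˣ) : K) • (Fintype.card W • z) = z := by
      rw [← Nat.cast_smul_eq_nsmul K, smul_smul, ← Nat.card_eq_fintype_card]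
      rw [hcard.val_inv_mul, one_smul]
    rw [h2]
    congr 1
    simp [LinearMap.sum_apply]
  rw [hz]
  exact Submodule.smul_mem _ _ (Submodule.sum_mem _ fun σ _ =>
    Submodule.smul_mem _ _ (Submodule.subset_span ⟨σ, z, rfl⟩))

lemma mkQ_permAct (W : Subgroup (Equiv.Perm (Fin d))) (χ : W →* Kˣ) (σ : W)
    (z : ⨂[K] (_ : Fin d), E) :
    (chiKer E W χ).mkQ (permAct K E d (σ : Equiv.Perm (Fin d)) z)
      = (((χ σ)⁻¹ : Kˣ) : K) • (chiKer E W χ).mkQ z := by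
  have h : ((((χ σ)⁻¹ : Kˣ) : K) • z - permAct K E d (σ : Equiv.Perm (Fin d)) z)
      ∈ chiKer E W χ := Submodule.subset_span ⟨σ, z, rfl⟩
  have h2 := (Submodule.Quotient.mk_eq_zero (chiKer E W χ)).2 h
  rw [← Submodule.mkQ_apply, map_sub, map_smul, sub_eq_zero] at h2
  exact h2.symm

lemma mkQ_symAct (W : Subgroup (Equiv.Perm (Fin d))) (χ : W →* Kˣ)
    (z : ⨂[K] (_ : Fin d), E) :
    (chiKer E W χ).mkQ (symAct W χ z) = (Nat.card W : K) • (chiKer E W χ).mkQ z := by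
  classical
  letI : Fintype W := Fintype.ofFinite W
  rw [symAct_eq]
  simp only [LinearMap.sum_apply, LinearMap.smul_apply, LinearEquiv.coe_coe, map_sum, map_smul,
    mkQ_permAct W χ, smul_smul]
  rw [Finset.sum_congr rfl fun (σ : W) _ => by
      rw [show (((χ σ) : Kˣ) : K) * (((χ σ)⁻¹ : Kˣ) : K) = 1 by norm_num, one_smul],
    Finset.sum_const, Finset.card_univ, ← Nat.cast_smul_eq_nsmul K,
    Nat.card_eq_fintype_card]

lemma dualPair_permAct (σ : Equiv.Perm (Fin d)) (z : ⨂[K] (_ : Fin d), E)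
    (w : ⨂[K] (_ : Fin d), Module.Dual K E) :
    dualPairAux K E d w (permAct K E d σ z)
      = dualPairAux K E d (permAct K (Module.Dual K E) d σ⁻¹ w) z := by
  induction z using PiTensorProduct.induction_on with
  | smul_tprod c x =>
    induction w using PiTensorProduct.induction_on with
    | smul_tprod c' y =>
      simp only [map_smul, LinearMap.smul_apply, permAct_tprod, dualPairAux_tprod,
        smul_eq_mul, inv_inv]
      congr 2
      exact (Equiv.prod_comp σ fun t => (y t) (x (σ⁻¹ t))).symm.trans
        (Finset.prod_congr rfl fun t _ => by simp)
    | add w₁ w₂ h₁ h₂ => simp only [map_add, LinearMap.add_apply, h₁, h₂]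
  | add z₁ z₂ h₁ h₂ => simp only [map_add, LinearMap.add_apply, h₁, h₂]

lemma dualPair_symAct (W : Subgroup (Equiv.Perm (Fin d))) (χ : W →* Kˣ)
    (z : ⨂[K] (_ : Fin d), E) (w : ⨂[K] (_ : Fin d), Module.Dual K E) :
    dualPairAux K E d w (symAct W χ z)
      = dualPairAux K E d (symAct (E := Module.Dual K E) W χ⁻¹ w) z := by
  classical
  letI : Fintype W := Fintype.ofFinite W
  rw [symAct_eq, symAct_eq]
  simp only [LinearMap.sum_apply, LinearMap.smul_apply, LinearEquiv.coe_coe, map_sum, map_smul,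
    MonoidHom.inv_apply]
  refine Fintype.sum_equiv (Equiv.inv W) _ _ fun σ => ?_
  simp only [Equiv.inv_apply, map_inv, inv_inv, InvMemClass.coe_inv]
  rw [← dualPair_permAct]

lemma semiKey (W : Subgroup (Equiv.Perm (Fin d))) (χ : W →* Kˣ)
    (BE : SemiPow E W χ →ₗ[K] SemiPow (Module.Dual K E) W χ⁻¹ →ₗ[K] K)
    (hBE : ∀ (x : Fin d → E) (y : Fin d → Module.Dual K E),
      BE (semiMk W χ x) (semiMk W χ⁻¹ y) = schurFn W χ (Matrix.of fun i j => y j (x i)))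
    (z : ⨂[K] (_ : Fin d), E) (w : ⨂[K] (_ : Fin d), Module.Dual K E) :
    BE (Submodule.Quotient.mk z) (Submodule.Quotient.mk w)
      = dualPairAux K E d w (symAct W χ z) := by
  classical
  letI : Fintype W := Fintype.ofFinite W
  induction z using PiTensorProduct.induction_on with
  | smul_tprod c x =>
    induction w using PiTensorProduct.induction_on with
    | smul_tprod c' y =>
      have core : BE (Submodule.Quotient.mk (tprod K x))
            (Submodule.Quotient.mk (tprod K y))
          = dualPairAux K E d (tprod K y) (symAct W χ (tprod K x)) := by
        have hb := hBE x y
        simp only [semiMk] at hb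
        rw [hb, schurFn, finsum_eq_sum_of_fintype, symAct_eq]
        simp only [LinearMap.sum_apply, LinearMap.smul_apply, LinearEquiv.coe_coe, map_sum,
          map_smul, permAct_tprod, dualPairAux_tprod, smul_eq_mul, Matrix.of_apply]
      simp only [Submodule.Quotient.mk_smul, map_smul, LinearMap.smul_apply, smul_eq_mul]
      rw [core]
      ring
    | add w₁ w₂ h₁ h₂ =>
      simp only [Submodule.Quotient.mk_add, map_add, LinearMap.add_apply, h₁, h₂]
  | add z₁ z₂ h₁ h₂ =>
      simp only [Submodule.Quotient.mk_add, map_add, LinearMap.add_apply, h₁, h₂]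

lemma symAct_map {F : Type*} [AddCommGroup F] [Module K F] (u : E →ₗ[K] F)
    (W : Subgroup (Equiv.Perm (Fin d))) (χ : W →* Kˣ) (z : ⨂[K] (_ : Fin d), E) :
    PiTensorProduct.map (fun _ => u) (symAct W χ z)
      = symAct W χ (PiTensorProduct.map (fun _ => u) z) := by
  classical
  letI : Fintype W := Fintype.ofFinite W
  rw [symAct_eq, symAct_eq]
  simp only [LinearMap.sum_apply, LinearMap.smul_apply, LinearEquiv.coe_coe, map_sum, map_smul]
  exact Finset.sum_congr rfl fun σ _ => by rw [map_permAct]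

lemma dualPair_map {F : Type*} [AddCommGroup F] [Module K F] (u : E →ₗ[K] F)
    (w : ⨂[K] (_ : Fin d), Module.Dual K F) (z : ⨂[K] (_ : Fin d), E) :
    dualPairAux K F d w (PiTensorProduct.map (fun _ => u) z)
      = dualPairAux K E d (PiTensorProduct.map (fun _ => u.dualMap) w) z := by
  induction z using PiTensorProduct.induction_on with
  | smul_tprod c x =>
    induction w using PiTensorProduct.induction_on with
    | smul_tprod c' y =>
      simp [PiTensorProduct.map_tprod]
    | add w₁ w₂ h₁ h₂ => simp only [map_add, LinearMap.add_apply, h₁, h₂]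
  | add z₁ z₂ h₁ h₂ => simp only [map_add, LinearMap.add_apply, map_add, h₁, h₂]

/-- Core bijectivity: the map `y* ↦ B(−, y*)` is bijective. -/
lemma semiFlip_bijective (W : Subgroup (Equiv.Perm (Fin d))) (χ : W →* Kˣ)
    (hcard : IsUnit ((Nat.card W : K))) {n : ℕ} (bE : Module.Basis (Fin n) K E)
    (BE : SemiPow E W χ →ₗ[K] SemiPow (Module.Dual K E) W χ⁻¹ →ₗ[K] K)
    (hBE : ∀ (x : Fin d → E) (y : Fin d → Module.Dual K E),
      BE (semiMk W χ x) (semiMk W χ⁻¹ y) = schurFn W χ (Matrix.of fun i j => y j (x i))) :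
    Function.Bijective ⇑BE.flip := by
  have hker : ∀ y, (∀ x, BE x y = 0) → y = 0 := by
    intro y hy
    obtain ⟨w, rfl⟩ := Submodule.Quotient.mk_surjective _ y
    have h1 : ∀ z, dualPairAux K E d (symAct (E := Module.Dual K E) W χ⁻¹ w) z = 0 := by
      intro z
      rw [← dualPair_symAct, ← semiKey W χ BE hBE z w]
      exact hy _
    have h3 : symAct (E := Module.Dual K E) W χ⁻¹ w = 0 := by
      refine (dualPairAux_bijective bE).injective ?_
      rw [map_zero]
      ext z
      simpa using h1 (tprod K z)
    have h4 : w ∈ chiKer (Module.Dual K E) W χ⁻¹ := by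
      have h5 := mem_chiKer_sub_symAct W χ⁻¹ hcard w
      rwa [h3, smul_zero, sub_zero] at h5
    exact (Submodule.Quotient.mk_eq_zero _).2 h4
  constructor
  · intro a b hab
    have h : ∀ x, BE x (a - b) = 0 := fun x => by
      have h2 : BE.flip a x = BE.flip b x := by rw [hab]
      simp only [LinearMap.flip_apply] at h2
      rw [map_sub, h2, sub_self]
    rw [← sub_eq_zero]
    exact hker _ h
  · intro f
    obtain ⟨w₀, hw⟩ := (dualPairAux_bijective bE).surjective (f ∘ₗ (chiKer E W χ).mkQ)
    refine ⟨(Submodule.Quotient.mk (((hcard.unit⁻¹ : Kˣ) : K) • w₀) :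
      SemiPow (Module.Dual K E) W χ⁻¹), ?_⟩
    refine LinearMap.ext fun x => ?_
    obtain ⟨z, rfl⟩ := Submodule.Quotient.mk_surjective _ x
    rw [LinearMap.flip_apply, Submodule.Quotient.mk_smul, map_smul,
      semiKey W χ BE hBE, hw, LinearMap.comp_apply, mkQ_symAct, map_smul, smul_smul]
    rw [hcard.val_inv_mul, one_smul, Submodule.mkQ_apply]

end DualityAux

/-- Theorem III.1 (ii) and Corollary III.9. The map
`ι_E : [χ⁻¹]^d(E*) → ([χ]^d(E))*`, `y* ↦ B(−, y*)`, is an isomorphism of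
`K`-modules, natural in `E`: for every `u : E → F` one has
`ᵗ([χ]^d(u)) ∘ ι_F = ι_E ∘ [χ⁻¹]^d(ᵗu)`, i.e.
`B_F([χ]^d(u)(x), y*) = B_E(x, [χ⁻¹]^d(ᵗu)(y*))`. -/
theorem semiPow_duality_natural {K : Type*} [CommRing K] [IsDomain K]
    {E F : Type*} [AddCommGroup E] [Module K E] [AddCommGroup F] [Module K F]
    {d : ℕ} (W : Subgroup (Equiv.Perm (Fin d))) (χ : W →* Kˣ)
    (hcard : IsUnit ((Nat.card W : K)))
    {n m : ℕ} (bE : Module.Basis (Fin n) K E) (bF : Module.Basis (Fin m) K F)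
    (BE : SemiPow E W χ →ₗ[K] SemiPow (Module.Dual K E) W χ⁻¹ →ₗ[K] K)
    (hBE : ∀ (x : Fin d → E) (y : Fin d → Module.Dual K E),
      BE (semiMk W χ x) (semiMk W χ⁻¹ y) = schurFn W χ (Matrix.of fun i j => y j (x i)))
    (BF : SemiPow F W χ →ₗ[K] SemiPow (Module.Dual K F) W χ⁻¹ →ₗ[K] K)
    (hBF : ∀ (x : Fin d → F) (y : Fin d → Module.Dual K F),
      BF (semiMk W χ x) (semiMk W χ⁻¹ y) = schurFn W χ (Matrix.of fun i j => y j (x i)))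
    (u : E →ₗ[K] F) :
    Function.Bijective ⇑BE.flip ∧ Function.Bijective ⇑BF.flip ∧
    (∀ (x : SemiPow E W χ) (y : SemiPow (Module.Dual K F) W χ⁻¹),
      BF (semiMap W χ u x) y = BE x (semiMap W χ⁻¹ u.dualMap y)) := by
  refine ⟨semiFlip_bijective W χ hcard bE BE hBE, semiFlip_bijective W χ hcard bF BF hBF, ?_⟩
  intro x y
  obtain ⟨z, rfl⟩ := Submodule.Quotient.mk_surjective _ x
  obtain ⟨w, rfl⟩ := Submodule.Quotient.mk_surjective _ y
  have h1 : semiMap W χ u (Submodule.Quotient.mk z)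
      = Submodule.Quotient.mk (PiTensorProduct.map (fun _ => u) z) := by
    simp only [semiMap, Submodule.mapQ_apply]
  have h2 : semiMap W χ⁻¹ u.dualMap (Submodule.Quotient.mk w)
      = Submodule.Quotient.mk (PiTensorProduct.map (fun _ => u.dualMap) w) := by
    simp only [semiMap, Submodule.mapQ_apply]
  rw [h1, h2, semiKey W χ BF hBF, semiKey W χ BE hBE, ← symAct_map, dualPair_map]
end
end

section
/- Let K be an integral domain, W ≤ S_d with |W| invertible in K, χ : W → U(K) a character, and let A = (a_{rt}) and A′ = (a′_{sh}) be n×d matrices over K. Then d_χ^W(ᵗA·A′) = Σ_{j∈J(χ,n,d)} |W_j|·A_{(j)}(χ)·A′_{(j)}(χ⁻¹). In particular, taking A′ = A, one obtains the generalized Lagrange identity d_χ^W(ᵗA·A) = Σ_{j∈J(χ,n,d)} |W_j|·A_{(j)}(χ)·A_{(j)}(χ⁻¹). -/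
noncomputable section

open scoped TensorProduct

/-- `R` is a system of representatives of the left cosets of `W` modulo the
stabilizer `W_j` of the multi-index `j`. -/
def IsRepSystem {d n : ℕ} (W : Subgroup (Equiv.Perm (Fin d)))
    (j : Fin d → Fin n) (R : Set (Equiv.Perm (Fin d))) : Prop :=
  (∀ ρ ∈ R, ρ ∈ W) ∧
  ∀ τ ∈ W, ∃! ρ, ρ ∈ R ∧ j ∘ ⇑(((ρ⁻¹ * τ))⁻¹) = j

open Classical in
/-- The `(j,(1,…,d))`-th row minor of weight `χ` of an `n×d` matrix `A`:
`A_{(j)}(χ) = Σ_{τ ∈ W^{(j)}} χ(τ)⁻¹ a_{τj,(1,…,d)}`, where `W^{(j)} = R`. -/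
def rowMinor {K : Type*} [CommRing K] {d n : ℕ}
    (W : Subgroup (Equiv.Perm (Fin d))) (χ : W →* Kˣ)
    (A : Matrix (Fin n) (Fin d) K) (R : Set (Equiv.Perm (Fin d)))
    (j : Fin d → Fin n) : K :=
  ∑ᶠ τ : W, if (τ : Equiv.Perm (Fin d)) ∈ R then
    (((χ τ)⁻¹ : Kˣ) : K) * ∏ t : Fin d, A (j ((((τ : Equiv.Perm (Fin d))))⁻¹ t)) t
  else 0

namespace SchurAux

open Finset

variable {K : Type*} [CommRing K] {d n : ℕ}

def act (σ : Equiv.Perm (Fin d)) (k : Fin d → Fin n) : Fin d → Fin n := k ∘ ⇑σ⁻¹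

lemma act_one (k : Fin d → Fin n) : act 1 k = k := by funext t; simp [act]

lemma act_mul (σ τ : Equiv.Perm (Fin d)) (k : Fin d → Fin n) :
    act (σ * τ) k = act σ (act τ k) := by
  funext t; simp [act, mul_inv_rev]

def aprod (A : Matrix (Fin n) (Fin d) K) (k : Fin d → Fin n) : K := ∏ t, A (k t) t

def finWF (d : ℕ) : WellFoundedLT (Fin d) := inferInstance

def lexLO (d n : ℕ) : LinearOrder (Lex (∀ _ : Fin d, Fin n)) :=
  @Pi.Lex.linearOrder (Fin d) (fun _ => Fin n) inferInstance
    (finWF d) inferInstance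

attribute [local instance] lexLO

lemma lexLT_iff (f g : Fin d → Fin n) : lexLT f g ↔ toLex f < toLex g := Iff.rfl

variable (W : Subgroup (Equiv.Perm (Fin d))) [Fintype ↥W]

open Classical in
def mrep (k : Fin d → Fin n) : Fin d → Fin n :=
  ofLex ((Finset.image (fun σ : ↥W => toLex (act (↑σ) k)) Finset.univ).min'
    (Finset.univ_nonempty.image _))

open Classical in
lemma mrep_spec (k : Fin d → Fin n) : ∃ σ : ↥W, act (↑σ) k = mrep W k := by
  have h := Finset.min'_mem (Finset.image (fun σ : ↥W => toLex (act (↑σ) k)) Finset.univ)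
    (Finset.univ_nonempty.image _)
  rw [Finset.mem_image] at h
  obtain ⟨σ, -, hσ⟩ := h
  exact ⟨σ, congrArg ofLex hσ⟩

open Classical in
lemma mrep_min (k : Fin d → Fin n) (σ : ↥W) : ¬ lexLT (act (↑σ) k) (mrep W k) := by
  intro hlt
  have h := Finset.min'_le (Finset.image (fun σ : ↥W => toLex (act (↑σ) k)) Finset.univ)
    (toLex (act (↑σ) k)) (Finset.mem_image_of_mem _ (Finset.mem_univ σ))
  have hlt' : toLex (act (↑σ) k) < (Finset.image (fun σ : ↥W => toLex (act (↑σ) k)) Finset.univ).min'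
      (Finset.univ_nonempty.image _) := hlt
  exact absurd h (not_le_of_gt hlt')

end SchurAux

namespace SchurAux

open Finset

variable {K : Type*} [CommRing K] {d n : ℕ}
variable (W : Subgroup (Equiv.Perm (Fin d))) [Fintype ↥W]

attribute [local instance] lexLO

open Classical in
lemma mrep_act (τ : ↥W) (k : Fin d → Fin n) : mrep W (act (↑τ) k) = mrep W k := by
  have himg : Finset.image (fun σ : ↥W => toLex (act (↑σ) (act (↑τ) k))) Finset.univ
      = Finset.image (fun σ : ↥W => toLex (act (↑σ) k)) Finset.univ := by
    ext x
    simp only [Finset.mem_image, Finset.mem_univ, true_and]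
    constructor
    · rintro ⟨σ, rfl⟩
      exact ⟨σ * τ, by rw [Subgroup.coe_mul, act_mul]⟩
    · rintro ⟨σ, rfl⟩
      refine ⟨σ * τ⁻¹, ?_⟩
      rw [← act_mul, ← Subgroup.coe_mul, inv_mul_cancel_right]
  have key : ∀ (s t : Finset (Lex (Fin d → Fin n))) (hs : s.Nonempty) (ht : t.Nonempty),
      s = t → s.min' hs = t.min' ht := by
    rintro s t hs ht rfl; rfl
  exact congrArg ofLex (key _ _ _ _ himg)

lemma mrep_eq_self (j : Fin d → Fin n)
    (hmin : ∀ σ : ↥W, ¬ lexLT (act (↑σ) j) j) : mrep W j = j := by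
  obtain ⟨σ, hσ⟩ := mrep_spec W j
  have h1 : ¬ toLex (mrep W j) < toLex j := hσ ▸ hmin σ
  have h2 : ¬ toLex j < toLex (mrep W j) := by
    have := mrep_min W j 1
    rwa [show act ((1:↥W) : Equiv.Perm (Fin d)) j = j from act_one j] at this
  have := le_antisymm (not_lt.mp h1) (not_lt.mp h2)
  exact (toLex.injective this).symm

lemma mrep_orbit_eq (k j : Fin d → Fin n) (h : mrep W k = j) :
    ∃ σ : ↥W, act (↑σ) j = k := by
  obtain ⟨σ, hσ⟩ := mrep_spec W k
  refine ⟨σ⁻¹, ?_⟩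
  rw [← h, ← hσ, ← act_mul]
  have h1 : ((σ⁻¹ : ↥W) : Equiv.Perm (Fin d)) * ↑σ = 1 := by
    rw [← Subgroup.coe_mul, inv_mul_cancel, Subgroup.coe_one]
  rw [h1, act_one]

lemma mrep_idem (k : Fin d → Fin n) : mrep W (mrep W k) = mrep W k := by
  obtain ⟨σ, hσ⟩ := mrep_spec W k
  rw [← hσ, mrep_act, hσ]

end SchurAux

namespace SchurAux

open Finset

variable {K : Type*} [CommRing K] {d n : ℕ}
variable (W : Subgroup (Equiv.Perm (Fin d))) [Fintype ↥W] (χ : ↥W →* Kˣ)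

/-- `F A k = Σ_{σ∈W} χ(σ) Π_t A_{k(σ t), t}`. -/
def Fsum (A : Matrix (Fin n) (Fin d) K) (k : Fin d → Fin n) : K :=
  ∑ σ : ↥W, ((χ σ : Kˣ) : K) * aprod A (k ∘ ⇑(σ : Equiv.Perm (Fin d)))

open Classical in
lemma rowMinor_eq (A : Matrix (Fin n) (Fin d) K) (R : Set (Equiv.Perm (Fin d)))
    (j : Fin d → Fin n) :
    rowMinor W χ A R j = ∑ τ : ↥W, if (τ : Equiv.Perm (Fin d)) ∈ R then
      (((χ τ)⁻¹ : Kˣ) : K) * aprod A (act (↑τ) j) else 0 := by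
  rw [rowMinor, finsum_eq_sum_of_fintype]
  refine Finset.sum_congr rfl fun τ _ => ?_
  by_cases hτ : (τ : Equiv.Perm (Fin d)) ∈ R
  · rw [if_pos hτ, if_pos hτ]; rfl
  · rw [if_neg hτ, if_neg hτ]

lemma schur_expand (A B : Matrix (Fin n) (Fin d) K) :
    schurFn W χ (A.transpose * B) = ∑ k : Fin d → Fin n, Fsum W χ A k * aprod B k := by
  classical
  rw [schurFn, finsum_eq_sum_of_fintype]
  have hσ : ∀ σ : ↥W, ((χ σ : Kˣ) : K)
        * ∏ t, (A.transpose * B) ((σ : Equiv.Perm (Fin d))⁻¹ t) t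
      = ∑ k : Fin d → Fin n,
          ((χ σ : Kˣ) : K) * (aprod A (k ∘ ⇑(σ : Equiv.Perm (Fin d))) * aprod B k) := by
    intro σ
    have h1 : ∏ t, (A.transpose * B) ((σ : Equiv.Perm (Fin d))⁻¹ t) t
        = ∑ k : Fin d → Fin n, aprod A (k ∘ ⇑(σ : Equiv.Perm (Fin d))) * aprod B k := by
      calc ∏ t, (A.transpose * B) ((σ : Equiv.Perm (Fin d))⁻¹ t) t
          = ∏ t, ∑ r, A r ((σ : Equiv.Perm (Fin d))⁻¹ t) * B r t := by
            simp [Matrix.mul_apply, Matrix.transpose_apply]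
        _ = ∑ k : Fin d → Fin n, ∏ t, A (k t) ((σ : Equiv.Perm (Fin d))⁻¹ t) * B (k t) t :=
            Fintype.prod_sum _
        _ = ∑ k : Fin d → Fin n, aprod A (k ∘ ⇑(σ : Equiv.Perm (Fin d))) * aprod B k := by
            refine Finset.sum_congr rfl fun k _ => ?_
            rw [Finset.prod_mul_distrib]
            congr 1
            exact (Fintype.prod_equiv (σ : Equiv.Perm (Fin d))
              (fun s => A ((k ∘ ⇑(σ : Equiv.Perm (Fin d))) s) s)
              (fun t => A (k t) ((σ : Equiv.Perm (Fin d))⁻¹ t)) (fun s => by simp)).symm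
    rw [h1, Finset.mul_sum]
  rw [Finset.sum_congr rfl (fun σ _ => hσ σ), Finset.sum_comm]
  refine Finset.sum_congr rfl fun k _ => ?_
  rw [Fsum, Finset.sum_mul]
  exact Finset.sum_congr rfl fun σ _ => (mul_assoc _ _ _).symm

lemma Fsum_eq_zero [IsDomain K] (A : Matrix (Fin n) (Fin d) K) (k : Fin d → Fin n)
    (π : ↥W) (hπ : act (↑π) k = k) (hχ : χ π ≠ 1) : Fsum W χ A k = 0 := by
  have key : Fsum W χ A k = (((χ π)⁻¹ : Kˣ) : K) * Fsum W χ A k := by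
    rw [Fsum, Finset.mul_sum]
    refine Fintype.sum_equiv (Equiv.mulLeft π) _ _ fun σ => ?_
    simp only [Equiv.coe_mulLeft]
    have harg : (k ∘ ⇑((π * σ : ↥W) : Equiv.Perm (Fin d))) = k ∘ ⇑(σ : Equiv.Perm (Fin d)) := by
      funext t
      have h0 := congrFun hπ ((π : Equiv.Perm (Fin d)) ((σ : Equiv.Perm (Fin d)) t))
      simp only [act, Function.comp_apply, Equiv.Perm.coe_inv, Equiv.symm_apply_apply] at h0
      simpa using h0.symm
    rw [harg, map_mul, ← mul_assoc, ← Units.val_mul, inv_mul_cancel_left]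
  have hsub : (1 - (((χ π)⁻¹ : Kˣ) : K)) * Fsum W χ A k = 0 := by
    rw [sub_mul, one_mul, ← key, sub_self]
  rcases mul_eq_zero.mp hsub with h | h
  · exfalso
    apply hχ
    have : (((χ π)⁻¹ : Kˣ) : K) = 1 := by linear_combination -h
    have h2 : (χ π)⁻¹ = 1 := Units.ext (by simpa using this)
    simpa [inv_eq_one] using h2
  · exact h

lemma Fsum_orbit (A : Matrix (Fin n) (Fin d) K) (j : Fin d → Fin n) (ρ : ↥W) :
    Fsum W χ A (act (↑ρ) j)
      = ((χ ρ : Kˣ) : K) * ∑ μ : ↥W, (((χ μ)⁻¹ : Kˣ) : K) * aprod A (act (↑μ) j) := by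
  rw [Finset.mul_sum, Fsum]
  refine (Fintype.sum_equiv ((Equiv.inv ↥W).trans (Equiv.mulLeft ρ)) _ _ fun μ => ?_).symm
  simp only [Equiv.trans_apply, Equiv.inv_apply, Equiv.coe_mulLeft]
  have harg : (act (↑ρ) j ∘ ⇑((ρ * μ⁻¹ : ↥W) : Equiv.Perm (Fin d))) = act (↑μ) j := by
    funext t
    simp [act, mul_inv_rev]
  rw [harg, map_mul, map_inv]
  push_cast
  ring

lemma sum_chiInv (A : Matrix (Fin n) (Fin d) K) (j : Fin d → Fin n)
    (R : Set (Equiv.Perm (Fin d)))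
    (hstab : ∀ σ : ↥W, act (↑σ) j = j → χ σ = 1) (hR : IsRepSystem W j R) :
    ∑ μ : ↥W, (((χ μ)⁻¹ : Kˣ) : K) * aprod A (act (↑μ) j)
      = (stabCard W j : K) * rowMinor W χ A R j := by
  classical
  -- the representative function
  have hex : ∀ μ : ↥W, ∃! ρ : Equiv.Perm (Fin d),
      ρ ∈ R ∧ act (ρ⁻¹ * (↑μ : Equiv.Perm (Fin d))) j = j :=
    fun μ => hR.2 (↑μ) μ.2
  set g : ↥W → ↥W := fun μ => ⟨(hex μ).choose, hR.1 _ (hex μ).choose_spec.1.1⟩ with hg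
  have hgR : ∀ μ : ↥W, ((g μ : ↥W) : Equiv.Perm (Fin d)) ∈ R :=
    fun μ => (hex μ).choose_spec.1.1
  have hgstab : ∀ μ : ↥W,
      act (((g μ : ↥W) : Equiv.Perm (Fin d))⁻¹ * (↑μ : Equiv.Perm (Fin d))) j = j :=
    fun μ => (hex μ).choose_spec.1.2
  have hguniq : ∀ (μ ρ : ↥W), ((ρ : ↥W) : Equiv.Perm (Fin d)) ∈ R →
      act (((ρ : ↥W) : Equiv.Perm (Fin d))⁻¹ * (↑μ : Equiv.Perm (Fin d))) j = j → ρ = g μ := by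
    intro μ ρ h1 h2
    have := (hex μ).choose_spec.2 ↑ρ ⟨h1, h2⟩
    exact Subtype.ext this
  have step1 : ∑ μ : ↥W, (((χ μ)⁻¹ : Kˣ) : K) * aprod A (act (↑μ) j)
      = ∑ τ : ↥W, ∑ μ : ↥W, if g μ = τ then (((χ μ)⁻¹ : Kˣ) : K) * aprod A (act (↑μ) j) else 0 := by
    rw [Finset.sum_comm]
    refine Finset.sum_congr rfl fun μ _ => ?_
    rw [Finset.sum_ite_eq Finset.univ (g μ)]
    simp
  rw [step1]
  have step2 : ∀ τ : ↥W, (∑ μ : ↥W, if g μ = τ then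
        (((χ μ)⁻¹ : Kˣ) : K) * aprod A (act (↑μ) j) else 0)
      = if (τ : Equiv.Perm (Fin d)) ∈ R then
          (stabCard W j : K) * ((((χ τ)⁻¹ : Kˣ) : K) * aprod A (act (↑τ) j)) else 0 := by
    intro τ
    by_cases hτ : (τ : Equiv.Perm (Fin d)) ∈ R
    · rw [if_pos hτ]
      have hre : ∑ μ : ↥W, (if g μ = τ then (((χ μ)⁻¹ : Kˣ) : K) * aprod A (act (↑μ) j) else 0)
          = ∑ ν : ↥W, (if g (τ * ν) = τ then
              (((χ (τ * ν))⁻¹ : Kˣ) : K) * aprod A (act (↑(τ * ν)) j) else 0) :=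
        (Fintype.sum_equiv (Equiv.mulLeft τ) _ _ fun ν => by simp [Equiv.coe_mulLeft]).symm
      rw [hre]
      have hiff : ∀ ν : ↥W, g (τ * ν) = τ ↔ act (↑ν) j = j := by
        intro ν
        constructor
        · intro h
          have := hgstab (τ * ν)
          rw [h] at this
          rwa [Subgroup.coe_mul, ← mul_assoc, inv_mul_cancel, one_mul] at this
        · intro h
          refine (hguniq (τ * ν) τ hτ ?_).symm
          rwa [Subgroup.coe_mul, ← mul_assoc, inv_mul_cancel, one_mul]
      have hval : ∀ ν : ↥W, act (↑ν) j = j →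
          (((χ (τ * ν))⁻¹ : Kˣ) : K) * aprod A (act (↑(τ * ν)) j)
            = (((χ τ)⁻¹ : Kˣ) : K) * aprod A (act (↑τ) j) := by
        intro ν h
        have h1 : act (↑(τ * ν)) j = act (↑τ) j := by
          rw [Subgroup.coe_mul, act_mul, h]
        rw [h1, map_mul, hstab ν h, mul_one]
      calc ∑ ν : ↥W, (if g (τ * ν) = τ then
              (((χ (τ * ν))⁻¹ : Kˣ) : K) * aprod A (act (↑(τ * ν)) j) else 0)
          = ∑ ν : ↥W, (if act (↑ν) j = j then
              (((χ τ)⁻¹ : Kˣ) : K) * aprod A (act (↑τ) j) else 0) := by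
            refine Finset.sum_congr rfl fun ν _ => ?_
            by_cases h : act (↑ν) j = j
            · rw [if_pos ((hiff ν).mpr h), if_pos h, hval ν h]
            · rw [if_neg (fun hc => h ((hiff ν).mp hc)), if_neg h]
        _ = (Finset.univ.filter (fun ν : ↥W => act (↑ν) j = j)).card
              • ((((χ τ)⁻¹ : Kˣ) : K) * aprod A (act (↑τ) j)) := by
            rw [← Finset.sum_filter, Finset.sum_const]
        _ = (stabCard W j : K) * ((((χ τ)⁻¹ : Kˣ) : K) * aprod A (act (↑τ) j)) := by
            rw [nsmul_eq_mul]
            congr 2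
            rw [stabCard, Nat.card_eq_fintype_card, Fintype.card_subtype]
            exact congrArg Finset.card (Finset.filter_congr (fun x _ => Iff.rfl))
    · rw [if_neg hτ]
      refine Finset.sum_eq_zero fun μ _ => ?_
      rw [if_neg]
      intro h
      exact hτ (h ▸ hgR μ)
  rw [Finset.sum_congr rfl fun τ _ => step2 τ]
  rw [rowMinor_eq, Finset.mul_sum]
  refine Finset.sum_congr rfl fun τ _ => ?_
  by_cases hτ : (τ : Equiv.Perm (Fin d)) ∈ R
  · rw [if_pos hτ, if_pos hτ]
  · rw [if_neg hτ, if_neg hτ, mul_zero]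

end SchurAux

/-- generalized Lagrange identity, Section III. For `n×d`
matrices `A, A′` over an integral domain `K` with `|W| ∈ U(K)`:
`d_χ^W(ᵗA·A′) = Σ_{j ∈ J(χ,n,d)} |W_j| · A_{(j)}(χ) · A′_{(j)}(χ⁻¹)`,
and in particular `d_χ^W(ᵗA·A) = Σ_j |W_j| · A_{(j)}(χ) · A_{(j)}(χ⁻¹)`. -/
theorem schurFn_lagrange {K : Type*} [CommRing K] [IsDomain K]
    {d n : ℕ} (W : Subgroup (Equiv.Perm (Fin d))) (χ : W →* Kˣ)
    (hcard : IsUnit ((Nat.card W : K)))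
    (A A' : Matrix (Fin n) (Fin d) K)
    (R : (Fin d → Fin n) → Set (Equiv.Perm (Fin d)))
    (hR : ∀ j : Fin d → Fin n, IsRepSystem W j (R j)) :
    schurFn W χ (A.transpose * A')
      = ∑ᶠ j : {i : Fin d → Fin n // i ∈ Jset W χ n},
          (stabCard W j.1 : K) * rowMinor W χ A (R j.1) j.1
            * rowMinor W χ⁻¹ A' (R j.1) j.1 ∧
    schurFn W χ (A.transpose * A)
      = ∑ᶠ j : {i : Fin d → Fin n // i ∈ Jset W χ n},
          (stabCard W j.1 : K) * rowMinor W χ A (R j.1) j.1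
            * rowMinor W χ⁻¹ A (R j.1) j.1 := by
  classical
  haveI : Fintype ↥W := Fintype.ofFinite _
  haveI : Fintype {i : Fin d → Fin n // i ∈ Jset W χ n} := Fintype.ofFinite _
  suffices main : ∀ B : Matrix (Fin n) (Fin d) K,
      schurFn W χ (A.transpose * B) = ∑ᶠ j : {i : Fin d → Fin n // i ∈ Jset W χ n},
        (stabCard W j.1 : K) * rowMinor W χ A (R j.1) j.1 * rowMinor W χ⁻¹ B (R j.1) j.1 by
    exact ⟨main A', main A⟩
  intro B
  rw [SchurAux.schur_expand W χ A B, finsum_eq_sum_of_fintype]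
  set T : (Fin d → Fin n) → K := fun k => SchurAux.Fsum W χ A k * SchurAux.aprod B k with hT
  set val : (Fin d → Fin n) → K := fun j =>
    (stabCard W j : K) * rowMinor W χ A (R j) j * rowMinor W χ⁻¹ B (R j) j with hval
  have hRHS : (∑ j : {i : Fin d → Fin n // i ∈ Jset W χ n}, val j.1)
      = ∑ j : Fin d → Fin n, if j ∈ Jset W χ n then val j else 0 := by
    rw [← Finset.sum_filter]
    exact (Finset.sum_subtype _ (fun x => by simp) val).symm
  rw [hRHS]
  have hLHS : (∑ k : Fin d → Fin n, T k)
      = ∑ j : Fin d → Fin n, ∑ k : Fin d → Fin n, if SchurAux.mrep W k = j then T k else 0 := by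
    rw [Finset.sum_comm]
    refine Finset.sum_congr rfl fun k _ => ?_
    rw [Finset.sum_ite_eq Finset.univ (SchurAux.mrep W k)]
    simp
  rw [hLHS]
  refine Finset.sum_congr rfl fun j _ => ?_
  by_cases hJ : j ∈ Jset W χ n
  · rw [if_pos hJ]
    obtain ⟨hJ1, hJ2⟩ := hJ
    have hmj : SchurAux.mrep W j = j := SchurAux.mrep_eq_self W j hJ2
    have hbij : (∑ k : Fin d → Fin n, if SchurAux.mrep W k = j then T k else 0)
        = ∑ τ : ↥W, if (τ : Equiv.Perm (Fin d)) ∈ R j then T (SchurAux.act (↑τ) j) else 0 := by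
      rw [← Finset.sum_filter, ← Finset.sum_filter]
      refine (Finset.sum_bij (fun (τ : ↥W) (_ : τ ∈ Finset.univ.filter
          (fun τ : ↥W => (τ : Equiv.Perm (Fin d)) ∈ R j)) => SchurAux.act (↑τ) j)
        ?_ ?_ ?_ ?_).symm
      · intro τ _
        rw [Finset.mem_filter]
        exact ⟨Finset.mem_univ _, by rw [SchurAux.mrep_act, hmj]⟩
      · intro τ1 h1 τ2 h2 heq
        rw [Finset.mem_filter] at h1 h2
        have heq' : SchurAux.act (↑τ1 : Equiv.Perm (Fin d)) j
            = SchurAux.act (↑τ2 : Equiv.Perm (Fin d)) j := heq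
        have hst : SchurAux.act ((↑τ2 : Equiv.Perm (Fin d))⁻¹ * (↑τ1 : Equiv.Perm (Fin d))) j
            = j := by
          rw [SchurAux.act_mul, heq', ← SchurAux.act_mul, inv_mul_cancel, SchurAux.act_one]
        obtain ⟨ρ0, -, hρ0u⟩ := (hR j).2 (↑τ1) τ1.2
        have e1 : (↑τ1 : Equiv.Perm (Fin d)) = ρ0 := hρ0u (↑τ1) ⟨h1.2,
          show SchurAux.act ((↑τ1 : Equiv.Perm (Fin d))⁻¹ * (↑τ1 : Equiv.Perm (Fin d))) j = j by
            rw [inv_mul_cancel]; exact SchurAux.act_one j⟩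
        have e2 : (↑τ2 : Equiv.Perm (Fin d)) = ρ0 := hρ0u (↑τ2) ⟨h2.2, hst⟩
        exact Subtype.ext (e1.trans e2.symm)
      · intro k hk
        rw [Finset.mem_filter] at hk
        obtain ⟨σ, hσ⟩ := SchurAux.mrep_orbit_eq W k j hk.2
        obtain ⟨ρ, ⟨hρR, hρst⟩, -⟩ := (hR j).2 (↑σ) σ.2
        refine ⟨⟨ρ, (hR j).1 ρ hρR⟩, Finset.mem_filter.mpr ⟨Finset.mem_univ _, hρR⟩, ?_⟩
        have hρst' : SchurAux.act (ρ⁻¹ * (↑σ : Equiv.Perm (Fin d))) j = j := hρst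
        have : SchurAux.act ρ j = SchurAux.act (↑σ : Equiv.Perm (Fin d)) j := by
          conv_lhs => rw [← hρst']
          rw [← SchurAux.act_mul]
          congr 1
          group
        exact this.trans hσ
      · intro τ hτ
        rfl
    rw [hbij]
    have hstab : ∀ σ : ↥W, SchurAux.act (↑σ) j = j → χ σ = 1 := hJ1
    have hS := SchurAux.sum_chiInv W χ A j (R j) hstab (hR j)
    have hstep : ∀ τ : ↥W, (τ : Equiv.Perm (Fin d)) ∈ R j →
        T (SchurAux.act (↑τ) j)
          = ((stabCard W j : K) * rowMinor W χ A (R j) j)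
              * (((χ τ : Kˣ) : K) * SchurAux.aprod B (SchurAux.act (↑τ) j)) := by
      intro τ _
      rw [hT]
      simp only
      rw [SchurAux.Fsum_orbit W χ A j τ, hS]
      ring
    have hrowB : rowMinor W χ⁻¹ B (R j) j
        = ∑ τ : ↥W, if (τ : Equiv.Perm (Fin d)) ∈ R j then
            ((χ τ : Kˣ) : K) * SchurAux.aprod B (SchurAux.act (↑τ) j) else 0 := by
      rw [SchurAux.rowMinor_eq]
      refine Finset.sum_congr rfl fun τ _ => ?_
      by_cases hτ : (τ : Equiv.Perm (Fin d)) ∈ R j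
      · rw [if_pos hτ, if_pos hτ, MonoidHom.inv_apply, inv_inv]
      · rw [if_neg hτ, if_neg hτ]
    rw [hval]
    simp only
    rw [hrowB, Finset.mul_sum]
    refine Finset.sum_congr rfl fun τ _ => ?_
    by_cases hτ : (τ : Equiv.Perm (Fin d)) ∈ R j
    · rw [if_pos hτ, if_pos hτ, hstep τ hτ]
    · rw [if_neg hτ, if_neg hτ, mul_zero]
  · rw [if_neg hJ]
    by_cases hmin : ∀ σ : ↥W, ¬ lexLT (j ∘ ⇑((σ : Equiv.Perm (Fin d)))⁻¹) j
    · have hc1 : ¬ ∀ σ : ↥W, j ∘ ⇑((σ : Equiv.Perm (Fin d)))⁻¹ = j → χ σ = 1 :=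
        fun hc => hJ ⟨hc, hmin⟩
      push_neg at hc1
      obtain ⟨π, hπ1, hπ2⟩ := hc1
      refine Finset.sum_eq_zero fun k _ => ?_
      by_cases h : SchurAux.mrep W k = j
      · rw [if_pos h, hT]
        simp only
        obtain ⟨σ, hσ⟩ := SchurAux.mrep_orbit_eq W k j h
        have hfix : SchurAux.act (↑(σ * π * σ⁻¹) : Equiv.Perm (Fin d)) k = k := by
          rw [Subgroup.coe_mul, Subgroup.coe_mul, SchurAux.act_mul, SchurAux.act_mul]
          have h1 : SchurAux.act (↑(σ⁻¹ : ↥W) : Equiv.Perm (Fin d)) k = j := by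
            rw [← hσ, ← SchurAux.act_mul, ← Subgroup.coe_mul, inv_mul_cancel,
              Subgroup.coe_one, SchurAux.act_one]
          rw [h1]
          have h2 : SchurAux.act (↑π) j = j := hπ1
          rw [h2, hσ]
        have hχ' : χ (σ * π * σ⁻¹) ≠ 1 := by
          rw [map_mul, map_mul, map_inv, mul_comm (χ σ) (χ π), mul_assoc, mul_inv_cancel,
            mul_one]
          exact hπ2
        rw [SchurAux.Fsum_eq_zero W χ A k (σ * π * σ⁻¹) hfix hχ', zero_mul]
      · rw [if_neg h]
    · push_neg at hmin
      obtain ⟨σ, hσlt⟩ := hmin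
      have hne : SchurAux.mrep W j ≠ j := by
        intro he
        exact (SchurAux.mrep_min W j σ) (by rw [he]; exact hσlt)
      refine Finset.sum_eq_zero fun k _ => ?_
      rw [if_neg]
      intro h
      apply hne
      rw [← h, SchurAux.mrep_idem, h]
end
end
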